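/- arXiv:2111.02310 — 4 statements merged into one kernel-verified Lean document; each statement's English description precedes it below -/
import Mathlib

section
/- Let n ≥ 1, θ_1,…,θ_n ∈ [0,1], and ψ^1,…,ψ^n ∈ ℝ. Define θ̂ = Σ_{i=1}^n θ_i/(n+θ_i) and φ^i = (n/(n+θ_i)) ψ^i + (θ_i/((n+θ_i)(1−θ̂))) Σ_{j=1}^n (n/(n+θ_j)) ψ^j. Then for every i, ψ^i = φ^i − (θ_i/n) Σ_{j≠i} φ^j. -/
lemma nash_aux (N T P S C : ℝ) (hN : N ≠ 0) (hNT : N + T ≠ 0) :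
    P = (N/(N+T))*P + T/(N+T)*C*S - (T/N)*(S*C - ((N/(N+T))*P + T/(N+T)*C*S)) := by
  field_simp
  ring


theorem nash_formula_solves_system (n : ℕ) (hn : 1 ≤ n) (θ ψ : Fin n → ℝ)
    (hθ : ∀ i, θ i ∈ Set.Icc (0 : ℝ) 1)
    (θhat : ℝ) (hθhat : θhat = ∑ i, θ i / (n + θ i))
    (φ : Fin n → ℝ)
    (hφ : ∀ i, φ i = (n / (n + θ i)) * ψ i
        + (θ i / ((n + θ i) * (1 - θhat))) * ∑ j, (n / (n + θ j)) * ψ j) :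
    ∀ i, ψ i = φ i - (θ i / n) * ∑ j ∈ Finset.univ.erase i, φ j := by
  have hn' : (1:ℝ) ≤ n := by exact_mod_cast hn
  have hnpos : (0:ℝ) < n := by linarith
  have hpos : ∀ j, (0:ℝ) < n + θ j := fun j => by have := (hθ j).1; linarith
  have hne : ∀ j, (n:ℝ) + θ j ≠ 0 := fun j => (hpos j).ne'
  have : Nonempty (Fin n) := Fin.pos_iff_nonempty.mp hn
  have hlt : θhat < 1 := by
    rw [hθhat]
    calc ∑ i, θ i / (n + θ i) < ∑ _i : Fin n, (1/n : ℝ) := by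
          apply Finset.sum_lt_sum_of_nonempty Finset.univ_nonempty
          intro j _
          rw [div_lt_div_iff₀ (hpos j) hnpos]
          have h1 := (hθ j).1; have h2 := (hθ j).2
          nlinarith
      _ = 1 := by
          rw [Finset.sum_const, Finset.card_univ, Fintype.card_fin,
            nsmul_eq_mul]
          field_simp
  have h1 : (1:ℝ) - θhat ≠ 0 := by linarith
  set S := ∑ j, ((n:ℝ) / (n + θ j)) * ψ j with hS
  have hterm : ∀ j, φ j = (n / (n + θ j)) * ψ j
      + (θ j / (n + θ j)) * (1 - θhat)⁻¹ * S := by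
    intro j
    rw [hφ j, div_mul_eq_div_div, div_eq_mul_inv (θ j / ((n:ℝ) + θ j))]
  have hsum : ∑ j, φ j = S * (1 - θhat)⁻¹ := by
    simp_rw [hterm, mul_assoc]
    rw [Finset.sum_add_distrib, ← Finset.sum_mul, ← hθhat, ← hS]
    field_simp
    ring
  intro i
  rw [Finset.sum_erase_eq_sub (Finset.mem_univ i), hsum, hterm i]
  exact nash_aux n (θ i) (ψ i) S (1 - θhat)⁻¹ hnpos.ne' (hne i)
end

section
/- Let n ≥ 1, θ_1,…,θ_n ∈ [0,1], and ψ^1,…,ψ^n ∈ ℝ. Then the linear system ψ^i = φ^i − (θ_i/n) Σ_{j≠i} φ^j (i = 1,…,n) has a unique solution (φ^1,…,φ^n) ∈ ℝ^n, given by φ^i = (n/(n+θ_i)) ψ^i + (θ_i/((n+θ_i)(1−θ̂))) Σ_{j=1}^n (n/(n+θ_j)) ψ^j, where θ̂ = Σ_{j=1}^n θ_j/(n+θ_j). -/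
theorem nash_system_unique_solution (n : ℕ) (hn : 1 ≤ n) (θ ψ : Fin n → ℝ)
    (hθ : ∀ i, θ i ∈ Set.Icc (0 : ℝ) 1)
    (θhat : ℝ) (hθhat : θhat = ∑ j, θ j / (n + θ j)) :
    (∃! φ : Fin n → ℝ, ∀ i, ψ i = φ i - (θ i / n) * ∑ j ∈ Finset.univ.erase i, φ j) ∧
    (∀ φ : Fin n → ℝ,
      (∀ i, ψ i = φ i - (θ i / n) * ∑ j ∈ Finset.univ.erase i, φ j) →
      ∀ i, φ i = (n / (n + θ i)) * ψ i
        + (θ i / ((n + θ i) * (1 - θhat))) * ∑ j, (n / (n + θ j)) * ψ j) := by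
  have hN : (1:ℝ) ≤ (n:ℝ) := by exact_mod_cast hn
  have hN0 : (n:ℝ) ≠ 0 := by linarith
  have hpos : ∀ i, (0:ℝ) < (n:ℝ) + θ i := fun i => by
    have := (hθ i).1; linarith
  have hne : ∀ i, ((n:ℝ) + θ i) ≠ 0 := fun i => ne_of_gt (hpos i)
  have hθhat_lt : θhat < 1 := by
    have hb : ∀ i ∈ Finset.univ, θ i / ((n:ℝ) + θ i) ≤ 1/((n:ℝ)+1) := by
      intro i _
      rw [div_le_div_iff₀ (hpos i) (by linarith)]
      have h1 := (hθ i).1; have h2 := (hθ i).2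
      nlinarith
    have hsum := Finset.sum_le_sum hb
    rw [Finset.sum_const, Finset.card_univ, Fintype.card_fin, nsmul_eq_mul] at hsum
    rw [hθhat]
    calc ∑ j, θ j / ((n:ℝ) + θ j) ≤ (n:ℝ) * (1/((n:ℝ)+1)) := hsum
    _ < 1 := by rw [mul_one_div, div_lt_one (by linarith)]; linarith
  have h1mθ : (0:ℝ) < 1 - θhat := by linarith
  have h1mθ' : (1 - θhat) ≠ 0 := ne_of_gt h1mθ
  obtain ⟨T, hT⟩ : ∃ T : ℝ, T = ∑ j, ((n:ℝ)/((n:ℝ)+θ j)) * ψ j := ⟨_, rfl⟩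
  -- key lemma: any solution has the closed form
  have key : ∀ φ : Fin n → ℝ,
      (∀ i, ψ i = φ i - (θ i / n) * ∑ j ∈ Finset.univ.erase i, φ j) →
      ∀ i, φ i = (n / (n + θ i)) * ψ i
        + (θ i / ((n + θ i) * (1 - θhat))) * T := by
    intro φ hφ
    obtain ⟨S, hS⟩ : ∃ S : ℝ, S = ∑ j, φ j := ⟨_, rfl⟩
    have h1 : ∀ i, φ i * ((n:ℝ) + θ i) = (n:ℝ) * ψ i + θ i * S := by
      intro i
      have h := hφ i
      rw [Finset.sum_erase_eq_sub (Finset.mem_univ i), ← hS] at h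
      field_simp at h
      nlinarith [h]
    have hSeq : S = T + θhat * S := by
      calc S = ∑ i, (((n:ℝ) * ψ i + θ i * S) / ((n:ℝ)+θ i)) := by
            conv_lhs => rw [hS]
            refine Finset.sum_congr rfl fun i _ => ?_
            rw [eq_div_iff (hne i)]; exact h1 i
      _ = ∑ i, (((n:ℝ)/((n:ℝ)+θ i)) * ψ i + (θ i/((n:ℝ)+θ i)) * S) := by
            refine Finset.sum_congr rfl fun i _ => ?_
            field_simp
      _ = T + (∑ i, θ i/((n:ℝ)+θ i)) * S := by
            rw [Finset.sum_add_distrib, hT, Finset.sum_mul]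
      _ = T + θhat * S := by rw [hθhat]
    have hSval : S = T / (1 - θhat) := by
      rw [eq_div_iff h1mθ']; linarith [hSeq]
    intro i
    have h2 := h1 i
    rw [hSval] at h2
    field_simp at h2
    have hD : (((n:ℝ)+θ i)*(1-θhat)) ≠ 0 := mul_ne_zero (hne i) h1mθ'
    rw [div_mul_eq_mul_div, div_mul_eq_mul_div, div_add_div _ _ (hne i) hD,
      eq_div_iff (mul_ne_zero (hne i) hD)]
    linear_combination ((n:ℝ) + θ i) * h2
  constructor
  · refine ⟨fun i => (n / (n + θ i)) * ψ i + (θ i / ((n + θ i) * (1 - θhat))) * T,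
      ?_, ?_⟩
    · -- existence: the closed form solves the system
      have hS0 : (∑ j, ((n / (n + θ j)) * ψ j
          + (θ j / ((n + θ j) * (1 - θhat))) * T)) = T / (1 - θhat) := by
        rw [Finset.sum_add_distrib]
        have e1 : ∑ j, (θ j / (((n:ℝ) + θ j) * (1 - θhat))) * T
            = (θhat / (1 - θhat)) * T := by
          rw [← Finset.sum_mul, hθhat, Finset.sum_div]
          congr 1
          refine Finset.sum_congr rfl fun j _ => ?_
          rw [div_div]
        rw [e1, ← hT]
        field_simp
        ring
      intro i
      simp only
      have hD : (((n:ℝ)+θ i)*(1-θhat)) ≠ 0 := mul_ne_zero (hne i) h1mθ'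
      rw [Finset.sum_erase_eq_sub (Finset.mem_univ i), hS0]
      have hA : ((n:ℝ)/((n:ℝ)+θ i))*ψ i + (θ i/(((n:ℝ)+θ i)*(1-θhat)))*T
          = ((n:ℝ)*ψ i*(1-θhat) + θ i*T)/(((n:ℝ)+θ i)*(1-θhat)) := by
        rw [div_mul_eq_mul_div, div_mul_eq_mul_div, div_add_div _ _ (hne i) hD,
          div_eq_div_iff (mul_ne_zero (hne i) hD) hD]
        ring
      rw [hA]
      have hTD : T/(1-θhat) = T*((n:ℝ)+θ i)/(((n:ℝ)+θ i)*(1-θhat)) := by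
        rw [div_eq_div_iff h1mθ' hD]; ring
      rw [hTD, div_sub_div_same, div_mul_div_comm,
        div_sub_div _ _ hD (mul_ne_zero hN0 hD),
        eq_div_iff (mul_ne_zero hD (mul_ne_zero hN0 hD))]
      ring
    · intro φ hφ
      funext i
      exact key φ hφ i
  · intro φ hφ i
    rw [key φ hφ i, hT]
end

section
/- Suppose (φ^1,…,φ^n) solves the system ψ^i = φ^i − (θ_i/n) Σ_{j≠i} φ^j with θ_i ∈ [0,1] and θ̂ = Σ_{i=1}^n θ_i/(n+θ_i). Then the aggregate φ̂ := Σ_{j=1}^n φ^j satisfies φ̂ = (1/(1−θ̂)) Σ_{i=1}^n (n/(n+θ_i)) ψ^i. -/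
theorem aggregate_formula (n : ℕ) (hn : 1 ≤ n) (θ ψ φ : Fin n → ℝ)
    (hθ : ∀ i, θ i ∈ Set.Icc (0 : ℝ) 1)
    (θhat : ℝ) (hθhat : θhat = ∑ i, θ i / (n + θ i))
    (hsys : ∀ i, ψ i = φ i - (θ i / n) * ∑ j ∈ Finset.univ.erase i, φ j) :
    (∑ j, φ j) = (1 / (1 - θhat)) * ∑ i, (n / (n + θ i)) * ψ i := by
  have hn0 : (0:ℝ) < n := by exact_mod_cast hn
  have hpos : ∀ i, (0:ℝ) < n + θ i := fun i => by have := (hθ i).1; linarith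
  set Φ := ∑ j, φ j with hΦ
  have key : ∑ i, (n / (n + θ i)) * ψ i = (1 - θhat) * Φ := by
    have hcong : ∀ i ∈ Finset.univ, ((n:ℝ) / (n + θ i)) * ψ i
        = φ i - (θ i / (n + θ i)) * Φ := by
      intro i _
      have he : ∑ j ∈ Finset.univ.erase i, φ j = Φ - φ i := by
        rw [hΦ, Finset.sum_erase_eq_sub (Finset.mem_univ i)]
      rw [hsys i, he]
      have h1 := (hpos i).ne'
      have h2 := hn0.ne'
      field_simp
      ring
    rw [Finset.sum_congr rfl hcong, Finset.sum_sub_distrib, ← Finset.sum_mul,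
      hθhat, ← hΦ]
    ring
  have hlt : θhat < 1 := by
    rw [hθhat]
    have hb : ∀ i ∈ Finset.univ, θ i / (n + θ i) ≤ 1 / (n + 1) := by
      intro i _
      rw [div_le_div_iff₀ (hpos i) (by linarith)]
      have := (hθ i).1; have := (hθ i).2
      nlinarith
    calc ∑ i, θ i / (n + θ i) ≤ ∑ _i : Fin n, 1 / ((n:ℝ) + 1) :=
          Finset.sum_le_sum hb
      _ = n * (1 / ((n:ℝ) + 1)) := by
          rw [Finset.sum_const, Finset.card_univ, Fintype.card_fin]; ring
      _ < 1 := by rw [mul_one_div, div_lt_one (by linarith)]; linarith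
  have hne : (1 : ℝ) - θhat ≠ 0 := by linarith
  rw [key]
  field_simp
end

section
/- Fix n ≥ 1, i ∈ {1,…,n}, θ_j ∈ [0,1] for j ≠ i, and reals ψ^1,…,ψ^n with ψ^i > 0 and Σ_{j≠i} (n/(n+θ_j)) ψ^j > 0. Then the function θ_i ↦ (n/(n+θ_i)) ψ^i + (θ_i/((n+θ_i)(1−θ̂(θ_i)))) Σ_{j=1}^n (n/(n+θ_j)) ψ^j, where θ̂(θ_i) = θ_i/(n+θ_i) + Σ_{j≠i} θ_j/(n+θ_j), is strictly increasing on [0,1]. -/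
theorem nash_strategy_monotone_in_theta (n : ℕ) (hn : 1 ≤ n) (i : Fin n)
    (θ ψ : Fin n → ℝ) (hθ : ∀ j, j ≠ i → θ j ∈ Set.Icc (0 : ℝ) 1)
    (hψi : 0 < ψ i)
    (hsum : 0 < ∑ j ∈ Finset.univ.erase i, (n / (n + θ j)) * ψ j) :
    StrictMonoOn (fun t : ℝ =>
      (n / (n + t)) * ψ i
        + (t / ((n + t) * (1 - (t / (n + t) + ∑ j ∈ Finset.univ.erase i, θ j / (n + θ j)))))
          * ((n / (n + t)) * ψ i + ∑ j ∈ Finset.univ.erase i, (n / (n + θ j)) * ψ j))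
      (Set.Icc 0 1) := by
  have hn1 : (1:ℝ) ≤ n := by exact_mod_cast hn
  set S : ℝ := ∑ j ∈ Finset.univ.erase i, θ j / (n + θ j) with hSdef
  set B : ℝ := ∑ j ∈ Finset.univ.erase i, (n / (n + θ j)) * ψ j with hBdef
  have hS0 : 0 ≤ S := Finset.sum_nonneg (fun j hj => by
    have h := hθ j (Finset.ne_of_mem_erase hj)
    have h1 : 0 ≤ θ j := h.1
    have h2 : 0 < (n:ℝ) + θ j := by linarith
    positivity)
  have hcard : (Finset.univ.erase i).card = n - 1 := by
    rw [Finset.card_erase_of_mem (Finset.mem_univ i)]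
    simp
  have hS1 : S * ((n:ℝ) + 1) ≤ (n:ℝ) - 1 := by
    have hle : S ≤ ((n - 1 : ℕ) : ℝ) * (1 / ((n:ℝ)+1)) := by
      calc S ≤ ∑ _j ∈ Finset.univ.erase i, (1 / ((n:ℝ)+1)) := by
              apply Finset.sum_le_sum
              intro j hj
              have h := hθ j (Finset.ne_of_mem_erase hj)
              have h1 : 0 ≤ θ j := h.1
              have h2 : θ j ≤ 1 := h.2
              have h3 : 0 < (n:ℝ) + θ j := by linarith
              rw [div_le_div_iff₀ h3 (by linarith)]
              nlinarith
        _ = ((n - 1 : ℕ) : ℝ) * (1 / ((n:ℝ)+1)) := by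
              rw [Finset.sum_const, hcard, nsmul_eq_mul]
    have hcast : ((n - 1 : ℕ) : ℝ) = (n:ℝ) - 1 := by
      rw [Nat.cast_sub hn]; simp
    rw [hcast] at hle
    have hpos : (0:ℝ) < (n:ℝ) + 1 := by linarith
    rw [mul_one_div, le_div_iff₀ hpos] at hle
    exact hle
  have hSlt1 : S < 1 := by nlinarith
  have key : ∀ t ∈ Set.Icc (0:ℝ) 1,
      (n / ((n:ℝ) + t)) * ψ i
        + (t / (((n:ℝ) + t) * (1 - (t / ((n:ℝ) + t) + S))))
          * ((n / ((n:ℝ) + t)) * ψ i + B)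
      = ((n:ℝ) * ψ i * (1 - S) + B * t) / ((n:ℝ) - S * ((n:ℝ) + t)) := by
    intro t ht
    have hnt : (0:ℝ) < (n:ℝ) + t := by linarith [ht.1]
    have hD : (1:ℝ) ≤ (n:ℝ) - S * ((n:ℝ) + t) := by nlinarith [ht.2, ht.1]
    have hQ : (0:ℝ) < 1 - (t / ((n:ℝ)+t) + S) := by
      have hid : ((n:ℝ)+t) * (1 - (t/((n:ℝ)+t)+S)) = (n:ℝ) - S * ((n:ℝ)+t) := by
        field_simp; ring
      nlinarith
    have hD0 : ((n:ℝ) - S * ((n:ℝ) + t)) ≠ 0 := by linarith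
    have hid : ((n:ℝ)+t) * (1 - (t/((n:ℝ)+t)+S)) = (n:ℝ) - S * ((n:ℝ)+t) := by
      field_simp; ring
    rw [hid]
    have hinv : ((n:ℝ) - n * S - t * S) * ((n:ℝ) - n * S - t * S)⁻¹ = 1 :=
      mul_inv_cancel₀ (by intro h; apply hD0; linarith)
    field_simp
    linear_combination (-((n:ℝ) * ψ i)) * hinv
  intro x hx y hy hxy
  simp only []
  rw [key x hx, key y hy]
  have hDx : (1:ℝ) ≤ (n:ℝ) - S * ((n:ℝ) + x) := by nlinarith [hx.2, hx.1]
  have hDy : (1:ℝ) ≤ (n:ℝ) - S * ((n:ℝ) + y) := by nlinarith [hy.2, hy.1]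
  rw [div_lt_div_iff₀ (by linarith) (by linarith)]
  nlinarith [mul_pos (sub_pos.2 hxy) (mul_pos hsum (mul_pos (by linarith : (0:ℝ) < (n:ℝ)) (by linarith : (0:ℝ) < 1 - S))),
    mul_nonneg (mul_nonneg (le_of_lt (sub_pos.2 hxy)) hS0) (mul_nonneg (mul_nonneg (by linarith : (0:ℝ) ≤ (n:ℝ)) hψi.le) (by linarith : (0:ℝ) ≤ 1 - S))]
end
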